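/- Let δ ∈ ℂ with 0 < |δ| < 1. Then the kernel equation, regarded as a quadratic polynomial equation in γ, has exactly one root γ (counted with multiplicity) with |γ| < |δ|, and that root is nonzero. -/

import Mathlib

open Polynomial in
/-- The kernel equation as a quadratic polynomial in γ (for fixed δ):
λ̄āa·γ² + (λ̄āa·δ² − (1 − (λ̄(ā²+a²)+λaā))·δ)·γ + (λ(a²+ā²)·δ² + λāa·δ³). -/
noncomputable def kernelQuadG (a lam : ℝ) (d : ℂ) : Polynomial ℂ :=
  C ((1-(lam:ℂ))*(1-(a:ℂ))*(a:ℂ)) * X^2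
  + C ((1-(lam:ℂ))*(1-(a:ℂ))*(a:ℂ)*d^2
      - (1 - ((1-(lam:ℂ))*((1-(a:ℂ))^2+(a:ℂ)^2) + (lam:ℂ)*(a:ℂ)*(1-(a:ℂ)))) * d) * X
  + C ((lam:ℂ)*((a:ℂ)^2+(1-(a:ℂ))^2)*d^2 + (lam:ℂ)*(1-(a:ℂ))*(a:ℂ)*d^3)

open Polynomial in
/-- for 0 < |δ| < 1 the kernel quadratic in γ has exactly one root
(with multiplicity) with |γ| < |δ|, and that root is nonzero. -/
theorem stmt5 (a lam : ℝ) (ha : 0 < a) (ha1 : a < 1) (hl : 0 < lam) (hl1 : lam < 1)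
    (d : ℂ) (hd0 : d ≠ 0) (hd1 : ‖d‖ < 1) :
    Multiset.card ((kernelQuadG a lam d).roots.filter
        (fun z => ‖z‖ < ‖d‖)) = 1 ∧
    ∀ z ∈ (kernelQuadG a lam d).roots, ‖z‖ < ‖d‖ → z ≠ 0 := by
  set r : ℝ := ‖d‖ with hr
  have hr0 : 0 < r := by rw [hr]; exact norm_pos_iff.mpr hd0
  -- real parameters
  set Ar : ℝ := (1-lam)*(1-a)*a with hAr
  set s : ℝ := 1 - ((1-lam)*((1-a)^2+a^2) + lam*a*(1-a)) with hs
  set c1 : ℝ := lam*(a^2+(1-a)^2) with hc1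
  set c2 : ℝ := lam*(1-a)*a with hc2
  have hApos : 0 < Ar := by
    rw [hAr]; exact mul_pos (mul_pos (by linarith) (by linarith)) ha
  have hspos : 0 < s := by
    rw [hs]
    nlinarith [mul_pos hl (show (0:ℝ) < 1 - 3*a*(1-a) by nlinarith [sq_nonneg (2*a-1)]),
      mul_pos ha (sub_pos.mpr ha1)]
  have hc1pos : 0 < c1 := by
    rw [hc1]; nlinarith [sq_nonneg (2*a-1), hl]
  have hc2pos : 0 < c2 := by
    rw [hc2]; exact mul_pos (mul_pos hl (by linarith)) ha
  have hc12 : c2 < c1 := by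
    rw [hc1, hc2]
    nlinarith [mul_pos hl (show (0:ℝ) < a^2+(1-a)^2 - (1-a)*a by nlinarith [sq_nonneg (2*a-1)])]
  have hid : s = 2*Ar + c1 + c2 := by rw [hs, hAr, hc1, hc2]; ring
  -- complex coefficients
  set Bc : ℂ := ((Ar:ℝ):ℂ)*d^2 - ((s:ℝ):ℂ)*d with hBc
  set Cc : ℂ := ((c1:ℝ):ℂ)*d^2 + ((c2:ℝ):ℂ)*d^3 with hCc
  have hA' : (((Ar:ℝ)):ℂ) ≠ 0 := by
    exact_mod_cast ne_of_gt hApos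
  have hpdef : kernelQuadG a lam d = C ((Ar:ℝ):ℂ) * X^2 + C Bc * X + C Cc := by
    unfold kernelQuadG
    rw [hBc, hCc, hAr, hs, hc1, hc2]
    push_cast
    ring_nf
  -- Cc ≠ 0
  have hCc0 : Cc ≠ 0 := by
    intro h
    have h2 : ((c1:ℝ):ℂ) = -(((c2:ℝ):ℂ) * d) := by
      have hd2 : (d:ℂ)^2 ≠ 0 := pow_ne_zero 2 hd0
      rw [hCc] at h
      have : d^2 * (((c1:ℝ):ℂ) + ((c2:ℝ):ℂ)*d) = 0 := by linear_combination h
      rcases mul_eq_zero.mp this with h3 | h3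
      · exact absurd h3 hd2
      · linear_combination h3
    have habs : c1 = c2 * r := by
      have := congrArg (‖·‖) h2
      simpa [map_mul, Complex.norm_real, Real.norm_eq_abs, abs_of_pos hc1pos, abs_of_pos hc2pos, hr] using this
    nlinarith
  -- degree and roots
  have hdeg : (kernelQuadG a lam d).natDegree = 2 := by
    rw [hpdef]; exact natDegree_quadratic hA'
  have hp0 : kernelQuadG a lam d ≠ 0 := by
    intro h; rw [h] at hdeg; simp at hdeg
  have hsplits := IsAlgClosed.splits (kernelQuadG a lam d)
  have hcard : Multiset.card (kernelQuadG a lam d).roots = 2 := by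
    rw [splits_iff_card_roots.mp hsplits, hdeg]
  obtain ⟨g1, g2, hroots⟩ := Multiset.card_eq_two.mp hcard
  have hlc : (kernelQuadG a lam d).leadingCoeff = ((Ar:ℝ):ℂ) := by
    rw [hpdef]; exact leadingCoeff_quadratic hA'
  have hfact : kernelQuadG a lam d = C ((Ar:ℝ):ℂ) * ((X - C g1) * (X - C g2)) := by
    have h := hsplits.eq_prod_roots
    rw [hroots, hlc] at h
    simpa [Multiset.map_cons, Multiset.prod_cons, mul_assoc] using h
  -- Vieta via evaluation
  have hev0 : Cc = ((Ar:ℝ):ℂ) * (g1 * g2) := by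
    have h := congrArg (Polynomial.eval 0) (hpdef.symm.trans hfact)
    simp at h
    linear_combination h
  have hev1 : ((Ar:ℝ):ℂ) + Bc + Cc = ((Ar:ℝ):ℂ) * ((1 - g1) * (1 - g2)) := by
    have h := congrArg (Polynomial.eval 1) (hpdef.symm.trans hfact)
    simpa using h
  have hBsum : Bc = -(((Ar:ℝ):ℂ) * (g1 + g2)) := by
    linear_combination hev1 - hev0
  -- absolute values
  set x : ℝ := ‖g1‖ with hx
  set y : ℝ := ‖g2‖ with hy
  have hxy : ‖Cc‖ = Ar * (x * y) := by
    rw [hev0]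
    simp [map_mul, Complex.norm_real, Real.norm_eq_abs, abs_of_pos hApos, hx, hy]
  have hsumle : ‖Bc‖ ≤ Ar * (x + y) := by
    rw [hBsum]
    rw [norm_neg, norm_mul]
    simp only [Complex.norm_real, Real.norm_eq_abs, abs_of_pos hApos]
    have := norm_add_le g1 g2
    nlinarith [norm_nonneg (g1 + g2)]
  -- lower bound on |Bc|
  have hBge : s * r - Ar * r^2 ≤ ‖Bc‖ := by
    have h1 : ‖Bc‖ = ‖((s:ℝ):ℂ)*d - ((Ar:ℝ):ℂ)*d^2‖ := by
      rw [hBc, show ((Ar:ℝ):ℂ)*d^2 - ((s:ℝ):ℂ)*d = -(((s:ℝ):ℂ)*d - ((Ar:ℝ):ℂ)*d^2) from by ring,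
        norm_neg]
    have h2 := norm_sub_norm_le (((s:ℝ):ℂ)*d) (((Ar:ℝ):ℂ)*d^2)
    rw [← h1] at h2
    have e1 : ‖((s:ℝ):ℂ)*d‖ = s * r := by
      simp [map_mul, Complex.norm_real, Real.norm_eq_abs, abs_of_pos hspos, hr]
    have e2 : ‖((Ar:ℝ):ℂ)*d^2‖ = Ar * r^2 := by
      simp [map_mul, map_pow, Complex.norm_real, Real.norm_eq_abs, abs_of_pos hApos, hr]
    rw [e1, e2] at h2
    exact h2
  -- upper bound on |Cc|
  have hCle : ‖Cc‖ ≤ c1 * r^2 + c2 * r^3 := by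
    rw [hCc]
    calc ‖((c1:ℝ):ℂ)*d^2 + ((c2:ℝ):ℂ)*d^3‖
        ≤ ‖((c1:ℝ):ℂ)*d^2‖ + ‖((c2:ℝ):ℂ)*d^3‖ := norm_add_le _ _
      _ = c1 * r^2 + c2 * r^3 := by
          simp [map_mul, map_pow, Complex.norm_real, Real.norm_eq_abs, abs_of_pos hc1pos, abs_of_pos hc2pos, hr]
  -- key inequality
  have hkey : Ar * r^2 + ‖Cc‖ < ‖Bc‖ * r := by
    have h1 : Ar * r^2 + (c1*r^2 + c2*r^3) < (s*r - Ar*r^2) * r := by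
      have key : (s*r - Ar*r^2)*r - (Ar*r^2 + (c1*r^2+c2*r^3)) = r^2*((Ar+c2)*(1-r)) := by
        rw [hid]; ring
      have hpos : 0 < r^2*((Ar+c2)*(1-r)) :=
        mul_pos (pow_pos hr0 2) (mul_pos (add_pos hApos hc2pos) (by linarith))
      linarith
    have h2 : (s*r - Ar*r^2) * r ≤ ‖Bc‖ * r :=
      mul_le_mul_of_nonneg_right hBge (le_of_lt hr0)
    linarith [hCle]
  -- exactly one root inside
  have hprod : (r - x) * (r - y) < 0 := by
    have h1 : Ar * r^2 + Ar * (x*y) < Ar * (x+y) * r := by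
      calc Ar * r^2 + Ar * (x*y) = Ar * r^2 + ‖Cc‖ := by rw [hxy]
        _ < ‖Bc‖ * r := hkey
        _ ≤ Ar * (x+y) * r := mul_le_mul_of_nonneg_right hsumle (le_of_lt hr0)
    have h2 : Ar * ((r - x) * (r - y)) < 0 := by
      have e : Ar * ((r - x) * (r - y)) = (Ar*r^2 + Ar*(x*y)) - Ar*(x+y)*r := by ring
      rw [e]; linarith
    by_contra hcon
    push_neg at hcon
    exact absurd h2 (not_lt.mpr (mul_nonneg hApos.le hcon))
  have hxnn : 0 ≤ x := norm_nonneg g1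
  have hynn : 0 ≤ y := norm_nonneg g2
  have hone : (x < r ∧ r < y) ∨ (y < r ∧ r < x) := by
    rcases lt_or_ge x r with h | h
    · left
      refine ⟨h, ?_⟩
      by_contra hcon
      push_neg at hcon
      exact absurd hprod (not_lt.mpr (mul_nonneg (by linarith) (by linarith)))
    · right
      have hy' : y < r := by
        by_contra hcon
        push_neg at hcon
        have h2 : (0:ℝ) ≤ (x - r)*(y - r) := mul_nonneg (by linarith) (by linarith)
        have e : (r-x)*(r-y) = (x-r)*(y-r) := by ring
        rw [e] at hprod
        linarith
      refine ⟨hy', ?_⟩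
      rcases eq_or_lt_of_le h with he | hlt
      · exfalso
        have hz : r - x = 0 := by linarith
        rw [hz, zero_mul] at hprod
        exact lt_irrefl 0 hprod
      · exact hlt
  constructor
  · rw [hroots, Multiset.insert_eq_cons, Multiset.filter_cons, Multiset.filter_singleton]
    rcases hone with ⟨h1, h2⟩ | ⟨h1, h2⟩
    · rw [if_pos h1, if_neg (not_lt.mpr h2.le)]
      simp
    · rw [if_neg (not_lt.mpr h2.le), if_pos h1]
      simp
  · intro z hz _ hz0
    subst hz0
    have : (kernelQuadG a lam d).IsRoot 0 := (Polynomial.mem_roots hp0).mp hz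
    have h0 : Polynomial.eval 0 (kernelQuadG a lam d) = Cc := by
      rw [hpdef]; simp
    rw [Polynomial.IsRoot, h0] at this
    exact hCc0 this
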